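/- arXiv:1305.4034 — 9 statements merged into one kernel-verified Lean document; each statement's English description precedes it below -/
import Mathlib

section
/- For every fuzzy bitopological space (X, τ₁, τ₂) and every μ ∈ τ₁, the map h_μ : X → L defined by h_μ(x) = (μ(x), 0) is bicontinuous from (X,τ₁,τ₂) to (L,Δ₁,Δ₂), and h_μ⁻¹(p₁) = μ, i.e., p₁ ∘ h_μ = μ. -/
noncomputable section
attribute [local instance] Classical.propDecidable

/-- Membership in the frame `L = {(a,b) ∈ [0,1]² : a + b ≤ 1}`. -/
abbrev Lmem (p : ℝ × ℝ) : Prop :=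
  0 ≤ p.1 ∧ p.1 ≤ 1 ∧ 0 ≤ p.2 ∧ p.2 ≤ 1 ∧ p.1 + p.2 ≤ 1

/-- The carrier of the frame `L`. -/
abbrev LL : Type := {p : ℝ × ℝ // Lmem p}

/-- The unit square `I² = [0,1] × [0,1]`. -/
abbrev I2 : Type := {p : ℝ × ℝ // 0 ≤ p.1 ∧ p.1 ≤ 1 ∧ 0 ≤ p.2 ∧ p.2 ≤ 1}

/-- `2I = (I × {0}) ∪ ({0} × I)`. -/
abbrev TwoI : Type :=
  {p : ℝ × ℝ // (0 ≤ p.1 ∧ p.1 ≤ 1 ∧ p.2 = 0) ∨ (p.1 = 0 ∧ 0 ≤ p.2 ∧ p.2 ≤ 1)}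

/-- A fuzzy (Chang) topology on `X`: a family of `[0,1]`-valued maps containing the
constants `0̄`, `1̄`, closed under arbitrary (nonempty) pointwise suprema and binary
pointwise infima. -/
def IsFuzzyTopology {X : Type} (τ : Set (X → ℝ)) : Prop :=
  (∀ μ ∈ τ, ∀ x, 0 ≤ μ x ∧ μ x ≤ 1) ∧
  ((fun _ => (0:ℝ)) ∈ τ) ∧
  ((fun _ => (1:ℝ)) ∈ τ) ∧
  (∀ S : Set (X → ℝ), S.Nonempty → S ⊆ τ → (fun x => ⨆ μ : S, (μ : X → ℝ) x) ∈ τ) ∧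
  (∀ μ ∈ τ, ∀ ν ∈ τ, (fun x => min (μ x) (ν x)) ∈ τ)

/-- Bicontinuity of a map between fuzzy bitopological spaces. -/
def Bicontinuous {X Y : Type} (f : X → Y)
    (τ₁ τ₂ : Set (X → ℝ)) (δ₁ δ₂ : Set (Y → ℝ)) : Prop :=
  (∀ ν ∈ δ₁, (fun x => ν (f x)) ∈ τ₁) ∧ (∀ ν ∈ δ₂, (fun x => ν (f x)) ∈ τ₂)

/-- The `T₀` separation property for a fuzzy bitopological space. -/
def IsT0 {X : Type} (τ₁ τ₂ : Set (X → ℝ)) : Prop :=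
  ∀ x y : X, x ≠ y → ∃ μ ∈ τ₁ ∪ τ₂, μ x ≠ μ y

/-- First projection `p₁` on `L`. -/
def pOne : LL → ℝ := fun z => z.1.1

/-- The map `1̄ - p₂` on `L`. -/
def pTwoC : LL → ℝ := fun z => 1 - z.1.2

/-- The fuzzy topology `Δ₁ = {0̄, p₁, 1̄}` on `L`. -/
def Delta1 : Set (LL → ℝ) := {fun _ => 0, pOne, fun _ => 1}

/-- The fuzzy topology `Δ₂ = {0̄, 1̄ - p₂, 1̄}` on `L`. -/
def Delta2 : Set (LL → ℝ) := {fun _ => 0, pTwoC, fun _ => 1}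

/-- The fuzzy topology `Π₁ = {0̄, π₁, 1̄}` on `I²`. -/
def Pi1 : Set (I2 → ℝ) := {fun _ => 0, fun w => w.1.1, fun _ => 1}

/-- The fuzzy topology `Π₂ = {0̄, π₂, 1̄}` on `I²`. -/
def Pi2 : Set (I2 → ℝ) := {fun _ => 0, fun w => w.1.2, fun _ => 1}

/-- The map `e : L → I²`, `e(a,b) = (a, 1-b)`. -/
def eMap : LL → I2 := fun z =>
  ⟨(z.1.1, 1 - z.1.2), by
    obtain ⟨h1, h2, h3, h4, h5⟩ := z.2
    exact ⟨h1, h2, by simp only [Prod.snd]; linarith, by simp only [Prod.snd]; linarith⟩⟩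

/-- The fuzzy set `q₁` on `2I`. -/
def q1 : TwoI → ℝ := fun z => if z.1.2 = 0 then z.1.1 else 0

/-- The fuzzy set `q₂` on `2I`. -/
def q2 : TwoI → ℝ := fun z => if z.1.1 = 0 then z.1.2 else 0

/-- The fuzzy topology `Ω₁ = {0̄, q₁, 1̄}` on `2I`. -/
def Omega1 : Set (TwoI → ℝ) := {fun _ => 0, q1, fun _ => 1}

/-- The fuzzy topology `Ω₂ = {0̄, q₂, 1̄}` on `2I`. -/
def Omega2 : Set (TwoI → ℝ) := {fun _ => 0, q2, fun _ => 1}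

/-- The join `τ₁ ∨ τ₂`: the smallest fuzzy topology containing `τ₁` and `τ₂`. -/
def joinFT {X : Type} (τ₁ τ₂ : Set (X → ℝ)) : Set (X → ℝ) :=
  ⋂₀ {δ : Set (X → ℝ) | IsFuzzyTopology δ ∧ τ₁ ⊆ δ ∧ τ₂ ⊆ δ}

/-- for `μ ∈ τ₁`, the map `h_μ(x) = (μ(x), 0)` is bicontinuous
into `(L, Δ₁, Δ₂)` and `p₁ ∘ h_μ = μ`. -/
theorem stmt7 (X : Type) (τ₁ τ₂ : Set (X → ℝ))
    (h₁ : IsFuzzyTopology τ₁) (h₂ : IsFuzzyTopology τ₂)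
    (μ : X → ℝ) (hμ : μ ∈ τ₁) :
    ∃ h : X → LL, (∀ x, (h x).1 = (μ x, 0)) ∧
      Bicontinuous h τ₁ τ₂ Delta1 Delta2 ∧ (fun x => pOne (h x)) = μ := by
  obtain ⟨hb, h0, h1top, _, _⟩ := h₁
  have hL : ∀ x, Lmem (μ x, 0) := by
    intro x
    obtain ⟨ha, hb'⟩ := hb μ hμ x
    exact ⟨ha, hb', le_refl 0, zero_le_one, by simpa using hb'⟩
  refine ⟨fun x => ⟨(μ x, 0), hL x⟩, fun x => rfl, ⟨?_, ?_⟩, rfl⟩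
  · intro ν hν
    rcases hν with h | h | h
    · subst h; exact h0
    · subst h; exact hμ
    · subst h; exact h1top
  · intro ν hν
    rcases hν with h | h | h
    · subst h; exact h₂.2.1
    · subst h
      have : (fun x => pTwoC (⟨(μ x, 0), hL x⟩ : LL)) = fun _ => (1:ℝ) := by
        funext x; simp [pTwoC]
      rw [this]; exact h₂.2.2.1
    · subst h; exact h₂.2.2.1
end
end

section
/- (L, Δ₁, Δ₂) is a Sierpinski object in BFTS: for every fuzzy bitopological space (X,τ₁,τ₂), the family F of all bicontinuous maps X → L is initial; that is, for any fuzzy bitopological space (Y,δ₁,δ₂) and any function g : Y → X such that f ∘ g is bicontinuous for all f ∈ F, the map g itself is bicontinuous. -/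
noncomputable section
attribute [local instance] Classical.propDecidable

/-- `(L, Δ₁, Δ₂)` is a Sierpinski object in `BFTS`: the family of
all bicontinuous maps into it is initial. -/
theorem stmt9 (X Y : Type) (τ₁ τ₂ : Set (X → ℝ)) (δ₁ δ₂ : Set (Y → ℝ))
    (hτ₁ : IsFuzzyTopology τ₁) (hτ₂ : IsFuzzyTopology τ₂)
    (hδ₁ : IsFuzzyTopology δ₁) (hδ₂ : IsFuzzyTopology δ₂)
    (g : Y → X)
    (h : ∀ f : X → LL, Bicontinuous f τ₁ τ₂ Delta1 Delta2 →
      Bicontinuous (fun y => f (g y)) δ₁ δ₂ Delta1 Delta2) :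
    Bicontinuous g δ₁ δ₂ τ₁ τ₂ := by
  constructor
  · intro μ hμ
    have hb := hτ₁.1 μ hμ
    set f : X → LL := fun x => ⟨(μ x, 0), by
      obtain ⟨h1, h2⟩ := hb x
      exact ⟨h1, h2, le_refl 0, zero_le_one, by simpa using h2⟩⟩ with hf
    have hfc : Bicontinuous f τ₁ τ₂ Delta1 Delta2 := by
      constructor
      · intro ν hν
        rcases hν with hν | hν | hν
        · subst hν; exact hτ₁.2.1
        · subst hν
          have : (fun x => pOne (f x)) = μ := rfl
          rw [this]; exact hμ
        · simp only [Set.mem_singleton_iff] at hν; subst hν; exact hτ₁.2.2.1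
      · intro ν hν
        rcases hν with hν | hν | hν
        · subst hν; exact hτ₂.2.1
        · subst hν
          have : (fun x => pTwoC (f x)) = fun _ => (1:ℝ) := by
            funext x; simp [pTwoC, hf]
          rw [this]; exact hτ₂.2.2.1
        · simp only [Set.mem_singleton_iff] at hν; subst hν; exact hτ₂.2.2.1
    have := (h f hfc).1 pOne (by right; left; rfl)
    exact this
  · intro μ hμ
    have hb := hτ₂.1 μ hμ
    set f : X → LL := fun x => ⟨(0, 1 - μ x), by
      obtain ⟨h1, h2⟩ := hb x
      refine ⟨le_refl 0, zero_le_one, by simp; linarith, by simp; linarith, by simp; linarith⟩⟩ with hf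
    have hfc : Bicontinuous f τ₁ τ₂ Delta1 Delta2 := by
      constructor
      · intro ν hν
        rcases hν with hν | hν | hν
        · subst hν; exact hτ₁.2.1
        · subst hν
          have : (fun x => pOne (f x)) = fun _ => (0:ℝ) := rfl
          rw [this]; exact hτ₁.2.1
        · simp only [Set.mem_singleton_iff] at hν; subst hν; exact hτ₁.2.2.1
      · intro ν hν
        rcases hν with hν | hν | hν
        · subst hν; exact hτ₂.2.1
        · subst hν
          have : (fun x => pTwoC (f x)) = μ := by
            funext x; simp [pTwoC, hf]
          rw [this]; exact hμ
        · simp only [Set.mem_singleton_iff] at hν; subst hν; exact hτ₂.2.2.1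
    have := (h f hfc).2 pTwoC (by right; left; rfl)
    have heq : (fun y => pTwoC (f (g y))) = fun y => μ (g y) := by
      funext y; simp [pTwoC, hf]
    rwa [heq] at this
end
end

section
/- (L, Δ₁, Δ₂) is a cogenerator in BFTS₀: for every pair of distinct bicontinuous maps f, g : (X,τ₁,τ₂) → (Y,δ₁,δ₂) between T₀ fuzzy bitopological spaces, there exists a bicontinuous map h : (Y,δ₁,δ₂) → (L,Δ₁,Δ₂) with h ∘ f ≠ h ∘ g. -/
noncomputable section
attribute [local instance] Classical.propDecidable

/-- `(L, Δ₁, Δ₂)` is a cogenerator in `BFTS₀`. -/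
theorem stmt10 (X Y : Type) (τ₁ τ₂ : Set (X → ℝ)) (δ₁ δ₂ : Set (Y → ℝ))
    (hτ₁ : IsFuzzyTopology τ₁) (hτ₂ : IsFuzzyTopology τ₂)
    (hδ₁ : IsFuzzyTopology δ₁) (hδ₂ : IsFuzzyTopology δ₂)
    (hX0 : IsT0 τ₁ τ₂) (hY0 : IsT0 δ₁ δ₂)
    (f g : X → Y)
    (hf : Bicontinuous f τ₁ τ₂ δ₁ δ₂) (hg : Bicontinuous g τ₁ τ₂ δ₁ δ₂)
    (hne : f ≠ g) :
    ∃ h : Y → LL, Bicontinuous h δ₁ δ₂ Delta1 Delta2 ∧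
      (fun x => h (f x)) ≠ (fun x => h (g x)) := by
  obtain ⟨x, hx⟩ := Function.ne_iff.mp hne
  obtain ⟨μ, hμ, hμne⟩ := hY0 (f x) (g x) hx
  rcases hμ with hμ1 | hμ2
  · refine ⟨fun y => ⟨(μ y, 0), ?_⟩, ⟨?_, ?_⟩, ?_⟩
    · obtain ⟨h0, h1⟩ := hδ₁.1 μ hμ1 y
      exact ⟨h0, h1, le_refl 0, zero_le_one, by simpa using h1⟩
    · intro ν hν
      rcases hν with h | h | h
      · subst h; exact hδ₁.2.1
      · subst h; exact hμ1
      · subst h; exact hδ₁.2.2.1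
    · intro ν hν
      rcases hν with h | h | h
      · subst h; exact hδ₂.2.1
      · subst h
        show (fun _ : Y => (1:ℝ) - 0) ∈ δ₂
        simpa using hδ₂.2.2.1
      · subst h; exact hδ₂.2.2.1
    · intro heq
      apply hμne
      have := congrFun heq x
      simpa [Subtype.ext_iff, Prod.ext_iff] using this
  · refine ⟨fun y => ⟨(0, 1 - μ y), ?_⟩, ⟨?_, ?_⟩, ?_⟩
    · obtain ⟨h0, h1⟩ := hδ₂.1 μ hμ2 y
      refine ⟨le_refl 0, zero_le_one, by simpa, ?_, ?_⟩ <;>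
        simp only [Prod.snd, Prod.fst] <;> linarith
    · intro ν hν
      rcases hν with h | h | h
      · subst h; exact hδ₁.2.1
      · subst h
        show (fun _ : Y => (0:ℝ)) ∈ δ₁
        exact hδ₁.2.1
      · subst h; exact hδ₁.2.2.1
    · intro ν hν
      rcases hν with h | h | h
      · subst h; exact hδ₂.2.1
      · subst h
        show (fun y : Y => (1:ℝ) - (1 - μ y)) ∈ δ₂
        simpa using hμ2
      · subst h; exact hδ₂.2.2.1
    · intro heq
      apply hμne
      have := congrFun heq x
      have h2 : 1 - μ (f x) = 1 - μ (g x) := by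
        simpa [Subtype.ext_iff, Prod.ext_iff] using this
      linarith
end
end

section
/- A fuzzy bitopological space (X, τ₁, τ₂) is T₀ if and only if the family F of all bicontinuous maps from (X,τ₁,τ₂) to (L,Δ₁,Δ₂) separates points of X, i.e., for all x ≠ y in X there exists f ∈ F with f(x) ≠ f(y). -/
noncomputable section
attribute [local instance] Classical.propDecidable

/-- `(X, τ₁, τ₂)` is `T₀` iff the bicontinuous maps into
`(L, Δ₁, Δ₂)` separate points of `X`. -/
theorem stmt11 (X : Type) (τ₁ τ₂ : Set (X → ℝ))
    (h₁ : IsFuzzyTopology τ₁) (h₂ : IsFuzzyTopology τ₂) :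
    IsT0 τ₁ τ₂ ↔
      ∀ x y : X, x ≠ y →
        ∃ f : X → LL, Bicontinuous f τ₁ τ₂ Delta1 Delta2 ∧ f x ≠ f y := by
  constructor
  · intro hT0 x y hxy
    obtain ⟨μ, hμ, hne⟩ := hT0 x y hxy
    rcases hμ with hμ | hμ
    · -- μ ∈ τ₁ : f z = (μ z, 0)
      have hb := h₁.1 μ hμ
      refine ⟨fun z => ⟨(μ z, 0), ⟨(hb z).1, (hb z).2, le_refl 0, zero_le_one, by
        simpa using (hb z).2⟩⟩, ⟨?_, ?_⟩, ?_⟩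
      · intro ν hν
        rcases hν with h | h | h <;> subst h
        · exact h₁.2.1
        · exact hμ
        · exact h₁.2.2.1
      · intro ν hν
        rcases hν with h | h | h <;> subst h
        · exact h₂.2.1
        · show (fun z => pTwoC _) ∈ τ₂
          simpa [pTwoC] using h₂.2.2.1
        · exact h₂.2.2.1
      · intro h
        apply hne
        have := congrArg (fun z => (Subtype.val z).1) h
        simpa using this
    · -- μ ∈ τ₂ : f z = (0, 1 - μ z)
      have hb := h₂.1 μ hμ
      have hmem : ∀ z, Lmem ((0:ℝ), 1 - μ z) := fun z =>
        ⟨le_refl 0, zero_le_one, by simp only; linarith [(hb z).2], by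
          simp only; linarith [(hb z).1], by simp only; linarith [(hb z).1]⟩
      refine ⟨fun z => ⟨(0, 1 - μ z), hmem z⟩, ⟨?_, ?_⟩, ?_⟩
      · intro ν hν
        rcases hν with h | h | h <;> subst h
        · exact h₁.2.1
        · show (fun z => pOne _) ∈ τ₁
          simpa [pOne] using h₁.2.1
        · exact h₁.2.2.1
      · intro ν hν
        rcases hν with h | h | h <;> subst h
        · exact h₂.2.1
        · show (fun z => pTwoC _) ∈ τ₂
          have : (fun z => pTwoC (⟨(0, 1 - μ z), hmem z⟩ : LL)) = μ := by
            funext z; simp [pTwoC]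
          rw [this]; exact hμ
        · exact h₂.2.2.1
      · intro h
        apply hne
        have := congrArg (fun z => (Subtype.val z).2) h
        simp only at this
        linarith
  · intro hsep x y hxy
    obtain ⟨f, ⟨hc1, hc2⟩, hne⟩ := hsep x y hxy
    by_cases h1 : (f x).1.1 = (f y).1.1
    · have h2 : (f x).1.2 ≠ (f y).1.2 := by
        intro h2
        exact hne (Subtype.ext (Prod.ext h1 h2))
      refine ⟨fun z => pTwoC (f z), Or.inr (hc2 pTwoC (by simp [Delta2])), ?_⟩
      simp only [pTwoC]
      intro h; exact h2 (by linarith)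
    · exact ⟨fun z => pOne (f z), Or.inl (hc1 pOne (by simp [Delta1])), h1⟩
end
end

section
/- For every T₀ fuzzy bitopological space (X,τ₁,τ₂), the evaluation map e : X → L^F, where F is the set of all bicontinuous maps X → L and e(x)(f) = f(x), is injective. -/
noncomputable section
attribute [local instance] Classical.propDecidable

/-- for a `T₀` fuzzy bitopological space, the evaluation map
`e : X → L^F`, `e(x)(f) = f(x)`, where `F` is the set of bicontinuous maps
`X → L`, is injective. -/
theorem stmt12 (X : Type) (τ₁ τ₂ : Set (X → ℝ))
    (h₁ : IsFuzzyTopology τ₁) (h₂ : IsFuzzyTopology τ₂) (h0 : IsT0 τ₁ τ₂) :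
    Function.Injective
      (fun (x : X) (f : {f : X → LL // Bicontinuous f τ₁ τ₂ Delta1 Delta2}) =>
        f.1 x) := by
  intro x y hxy
  by_contra hne
  obtain ⟨μ, hμ, hval⟩ := h0 x y hne
  have key : ∃ f : {f : X → LL // Bicontinuous f τ₁ τ₂ Delta1 Delta2},
      f.1 x ≠ f.1 y := by
    cases hμ with
    | inl hμ₁ =>
      have hb := h₁.1 μ hμ₁
      have hm : ∀ z, Lmem (μ z, 0) := fun z => by
        obtain ⟨h0z, h1z⟩ := hb z
        exact ⟨h0z, h1z, le_refl 0, by norm_num, by simpa using h1z⟩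
      refine ⟨⟨fun z => ⟨(μ z, 0), hm z⟩, ?_, ?_⟩, ?_⟩
      · intro ν hν
        rcases hν with h | h | h
        · subst h; exact h₁.2.1
        · subst h; exact hμ₁
        · rw [Set.mem_singleton_iff] at h; subst h; exact h₁.2.2.1
      · intro ν hν
        rcases hν with h | h | h
        · subst h; exact h₂.2.1
        · subst h
          have : (fun z => pTwoC ⟨(μ z, 0), hm z⟩) = fun _ => (1:ℝ) := by
            funext z; simp [pTwoC]
          rw [this]; exact h₂.2.2.1
        · rw [Set.mem_singleton_iff] at h; subst h; exact h₂.2.2.1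
      · intro hc
        apply hval
        have := congrArg (fun (p : LL) => p.1.1) hc
        simpa using this
    | inr hμ₂ =>
      have hb := h₂.1 μ hμ₂
      have hm : ∀ z, Lmem ((0:ℝ), 1 - μ z) := fun z => by
        obtain ⟨h0z, h1z⟩ := hb z
        exact ⟨le_refl 0, by norm_num, by simp; linarith, by simp; linarith,
          by simp; linarith⟩
      refine ⟨⟨fun z => ⟨((0:ℝ), 1 - μ z), hm z⟩, ?_, ?_⟩, ?_⟩
      · intro ν hν
        rcases hν with h | h | h
        · subst h; exact h₁.2.1
        · subst h; exact h₁.2.1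
        · rw [Set.mem_singleton_iff] at h; subst h; exact h₁.2.2.1
      · intro ν hν
        rcases hν with h | h | h
        · subst h; exact h₂.2.1
        · subst h
          have : (fun z => pTwoC ⟨((0:ℝ), 1 - μ z), hm z⟩) = μ := by
            funext z; simp [pTwoC]
          rw [this]; exact hμ₂
        · rw [Set.mem_singleton_iff] at h; subst h; exact h₂.2.2.1
      · intro hc
        apply hval
        have := congrArg (fun (p : LL) => p.1.2) hc
        simp at this
        linarith
  obtain ⟨f, hf⟩ := key
  exact hf (congrFun hxy f)
end
end

section
/- Every frame homomorphism p : Δ₁ ∨ Δ₂ → [0,1] from the join fuzzy topology Δ₁ ∨ Δ₂ = {0̄, p₁, 1̄−p₂, 1̄} on L to [0,1] is of the form evaluation at a point of L; explicitly, if p(p₁) = α and p(1̄−p₂) = β, then α ≤ β, the pair (α, 1−β) lies in L, and p(μ) = μ(α, 1−β) for all μ ∈ Δ₁ ∨ Δ₂. Consequently x ↦ (μ ↦ μ(x)) is a bijection from L onto the set of frame homomorphisms Δ₁ ∨ Δ₂ → [0,1] (i.e., (L,Δ₁,Δ₂) is bisober). -/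
noncomputable section
attribute [local instance] Classical.propDecidable

/-- The join fuzzy topology `Δ₁ ∨ Δ₂ = {0̄, p₁, 1̄ - p₂, 1̄}` on `L`. -/
def DJoin : Set (LL → ℝ) := {fun _ => 0, pOne, pTwoC, fun _ => 1}

lemma zero_mem_DJoin : (fun _ : LL => (0:ℝ)) ∈ DJoin := by
  simp [DJoin]

lemma pOne_mem_DJoin : pOne ∈ DJoin := by
  simp [DJoin]

lemma pTwoC_mem_DJoin : pTwoC ∈ DJoin := by
  simp [DJoin]

lemma one_mem_DJoin : (fun _ : LL => (1:ℝ)) ∈ DJoin := by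
  simp [DJoin]

/-- A frame homomorphism `p : Δ₁ ∨ Δ₂ → [0,1]`: it sends `0̄ ↦ 0`, `1̄ ↦ 1` and
is order-preserving (since `Δ₁ ∨ Δ₂` is a finite chain, this is equivalent to
preserving arbitrary sups and finite infs). -/
def IsFramePoint (p : {μ : LL → ℝ // μ ∈ DJoin} → ℝ) : Prop :=
  p ⟨fun _ => 0, zero_mem_DJoin⟩ = 0 ∧
  p ⟨fun _ => 1, one_mem_DJoin⟩ = 1 ∧
  ∀ μ ν : {μ : LL → ℝ // μ ∈ DJoin}, (∀ z, μ.1 z ≤ ν.1 z) → p μ ≤ p ν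

/-- every frame homomorphism `p : Δ₁ ∨ Δ₂ → [0,1]` is evaluation
at the point `(p(p₁), 1 - p(1̄ - p₂)) ∈ L`, and `x ↦ (μ ↦ μ(x))` is a bijection
from `L` onto the frame homomorphisms, i.e. `(L, Δ₁, Δ₂)` is bisober. -/
theorem stmt13 :
    (∀ p, IsFramePoint p →
      p ⟨pOne, pOne_mem_DJoin⟩ ≤ p ⟨pTwoC, pTwoC_mem_DJoin⟩ ∧
      Lmem (p ⟨pOne, pOne_mem_DJoin⟩, 1 - p ⟨pTwoC, pTwoC_mem_DJoin⟩) ∧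
      ∃ z : LL,
        z.1 = (p ⟨pOne, pOne_mem_DJoin⟩, 1 - p ⟨pTwoC, pTwoC_mem_DJoin⟩) ∧
        ∀ μ : {μ : LL → ℝ // μ ∈ DJoin}, p μ = μ.1 z) ∧
    (∀ z w : LL, (∀ μ : {μ : LL → ℝ // μ ∈ DJoin}, μ.1 z = μ.1 w) → z = w) ∧
    (∀ p, IsFramePoint p →
      ∃ z : LL, ∀ μ : {μ : LL → ℝ // μ ∈ DJoin}, p μ = μ.1 z) := by
  have main : ∀ p, IsFramePoint p →
      p ⟨pOne, pOne_mem_DJoin⟩ ≤ p ⟨pTwoC, pTwoC_mem_DJoin⟩ ∧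
      Lmem (p ⟨pOne, pOne_mem_DJoin⟩, 1 - p ⟨pTwoC, pTwoC_mem_DJoin⟩) ∧
      ∃ z : LL,
        z.1 = (p ⟨pOne, pOne_mem_DJoin⟩, 1 - p ⟨pTwoC, pTwoC_mem_DJoin⟩) ∧
        ∀ μ : {μ : LL → ℝ // μ ∈ DJoin}, p μ = μ.1 z := by
    intro p hp
    obtain ⟨h0, h1, hmono⟩ := hp
    set α := p ⟨pOne, pOne_mem_DJoin⟩ with hα
    set β := p ⟨pTwoC, pTwoC_mem_DJoin⟩ with hβ
    have hαβ : α ≤ β := by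
      apply hmono
      intro z
      obtain ⟨_, _, _, _, h5⟩ := z.2
      simp only [pOne, pTwoC]
      linarith
    have h0α : 0 ≤ α := by
      have := hmono ⟨fun _ => 0, zero_mem_DJoin⟩ ⟨pOne, pOne_mem_DJoin⟩
        (fun z => z.2.1)
      rwa [h0] at this
    have hβ1 : β ≤ 1 := by
      have := hmono ⟨pTwoC, pTwoC_mem_DJoin⟩ ⟨fun _ => 1, one_mem_DJoin⟩
        (fun z => by simp only [pTwoC]; linarith [z.2.2.2.1])
      rwa [h1] at this
    have hL : Lmem (α, 1 - β) := by
      exact ⟨h0α, by linarith, show (0:ℝ) ≤ 1 - β by linarith,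
        show (1:ℝ) - β ≤ 1 by linarith, show α + (1 - β) ≤ 1 by linarith⟩
    refine ⟨hαβ, hL, ⟨(α, 1 - β), hL⟩, rfl, ?_⟩
    intro μ
    have hm := μ.2
    simp only [DJoin, Set.mem_insert_iff, Set.mem_singleton_iff] at hm
    rcases hm with h | h | h | h
    · have : μ = ⟨fun _ => 0, zero_mem_DJoin⟩ := Subtype.ext h
      rw [this, h0]
    · have : μ = ⟨pOne, pOne_mem_DJoin⟩ := Subtype.ext h
      rw [this]
      rfl
    · have : μ = ⟨pTwoC, pTwoC_mem_DJoin⟩ := Subtype.ext h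
      rw [this]
      show β = 1 - (1 - β)
      ring
    · have : μ = ⟨fun _ => 1, one_mem_DJoin⟩ := Subtype.ext h
      rw [this, h1]
  refine ⟨main, ?_, ?_⟩
  · intro z w h
    have h1 := h ⟨pOne, pOne_mem_DJoin⟩
    have h2 := h ⟨pTwoC, pTwoC_mem_DJoin⟩
    simp only [pOne, pTwoC] at h1 h2
    exact Subtype.ext (Prod.ext h1 (by linarith))
  · intro p hp
    obtain ⟨_, _, z, _, hz⟩ := main p hp
    exact ⟨z, hz⟩
end
end

section
/- The embedding e : (L,Δ₁,Δ₂) → (I²,Π₁,Π₂), e(a,b) = (a,1−b), is an epimorphism in BFTS₀: for any distinct bicontinuous maps f, g : (I²,Π₁,Π₂) → (Y,δ₁,δ₂) with (Y,δ₁,δ₂) T₀, we have f ∘ e ≠ g ∘ e. -/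
noncomputable section
attribute [local instance] Classical.propDecidable

def phalf : I2 := ⟨(1/2, 1/2), by norm_num⟩

def zhalf : LL := ⟨(1/2, 1/2), by refine ⟨?_, ?_, ?_, ?_, ?_⟩ <;> norm_num⟩

lemma eMap_zhalf : eMap zhalf = phalf := by
  simp only [eMap, zhalf, phalf]
  norm_num

lemma pi1_eq (φ ψ : I2 → ℝ) (hφ : φ ∈ Pi1) (hψ : ψ ∈ Pi1)
    (h : φ phalf = ψ phalf) : φ = ψ := by
  simp only [Pi1, Set.mem_insert_iff, Set.mem_singleton_iff] at hφ hψ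
  rcases hφ with h1 | h1 | h1 <;> rcases hψ with h2 | h2 | h2 <;>
    subst h1 <;> subst h2 <;> first
      | rfl
      | (exfalso; simp only [phalf] at h; norm_num at h)

lemma pi2_eq (φ ψ : I2 → ℝ) (hφ : φ ∈ Pi2) (hψ : ψ ∈ Pi2)
    (h : φ phalf = ψ phalf) : φ = ψ := by
  simp only [Pi2, Set.mem_insert_iff, Set.mem_singleton_iff] at hφ hψ
  rcases hφ with h1 | h1 | h1 <;> rcases hψ with h2 | h2 | h2 <;>
    subst h1 <;> subst h2 <;> first
      | rfl
      | (exfalso; simp only [phalf] at h; norm_num at h)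

/-- the embedding `e : (L,Δ₁,Δ₂) → (I²,Π₁,Π₂)` is an epimorphism
in `BFTS₀`. -/
theorem stmt15 (Y : Type) (δ₁ δ₂ : Set (Y → ℝ))
    (hδ₁ : IsFuzzyTopology δ₁) (hδ₂ : IsFuzzyTopology δ₂) (hY0 : IsT0 δ₁ δ₂)
    (f g : I2 → Y)
    (hf : Bicontinuous f Pi1 Pi2 δ₁ δ₂) (hg : Bicontinuous g Pi1 Pi2 δ₁ δ₂)
    (hne : f ≠ g) :
    (fun z => f (eMap z)) ≠ (fun z => g (eMap z)) := by
  intro h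
  apply hne
  funext w
  by_contra hfw
  obtain ⟨μ, hμ, hμne⟩ := hY0 (f w) (g w) hfw
  have hhalf : f phalf = g phalf := by
    rw [← eMap_zhalf]; exact congrFun h zhalf
  rcases hμ with hμ | hμ
  · have h1 : (fun x => μ (f x)) ∈ Pi1 := hf.1 μ hμ
    have h2 : (fun x => μ (g x)) ∈ Pi1 := hg.1 μ hμ
    have := pi1_eq _ _ h1 h2 (by simp [hhalf])
    exact hμne (congrFun this w)
  · have h1 : (fun x => μ (f x)) ∈ Pi2 := hf.2 μ hμ
    have h2 : (fun x => μ (g x)) ∈ Pi2 := hg.2 μ hμ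
    have := pi2_eq _ _ h1 h2 (by simp [hhalf])
    exact hμne (congrFun this w)
end
end

section
/- There is no bicontinuous map h : (I²,Π₁,Π₂) → (L,Δ₁,Δ₂) such that h ∘ e = id_L, where e(a,b) = (a,1−b); hence (L,Δ₁,Δ₂) is not injective with respect to the class of embeddings in BFTS₀. -/
noncomputable section
attribute [local instance] Classical.propDecidable

/-- there is no bicontinuous `h : (I²,Π₁,Π₂) → (L,Δ₁,Δ₂)` with
`h ∘ e = id`, so `(L,Δ₁,Δ₂)` is not injective w.r.t. embeddings in `BFTS₀`. -/
theorem stmt16 :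
    ¬ ∃ h : I2 → LL, Bicontinuous h Pi1 Pi2 Delta1 Delta2 ∧
      (fun z => h (eMap z)) = id := by
  rintro ⟨h, ⟨hc1, hc2⟩, hret⟩
  have hid : ∀ z : LL, h (eMap z) = z := fun z => congrFun hret z
  have hp1 : (fun x => pOne (h x)) ∈ Pi1 := hc1 pOne (by right; left; rfl)
  have hp2 : (fun x => pTwoC (h x)) ∈ Pi2 := hc2 pTwoC (by right; left; rfl)
  simp only [Pi1, Pi2, Set.mem_insert_iff, Set.mem_singleton_iff] at hp1 hp2
  -- pin down hp1 = π₁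
  rcases hp1 with h0 | h1 | h2
  · have := congrFun h0 (eMap ⟨(1,0), by norm_num [Lmem]⟩)
    rw [hid] at this
    simp [pOne] at this
  · rcases hp2 with g0 | g1 | g2
    · have := congrFun g0 (eMap ⟨(0,0), by norm_num [Lmem]⟩)
      rw [hid] at this
      simp [pTwoC, eMap] at this
    · -- main case: w = (1,0)
      set w : I2 := ⟨(1,0), by norm_num⟩
      have e1 := congrFun h1 w
      have e2 := congrFun g1 w
      simp only [pOne, pTwoC] at e1 e2
      have hw := (h w).2
      obtain ⟨a1, a2, a3, a4, a5⟩ := hw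
      have : (h w).1.1 = 1 := e1
      have h2' : (h w).1.2 = 1 := by
        have : (1:ℝ) - (h w).1.2 = 0 := e2
        linarith
      linarith
    · have := congrFun g2 (eMap ⟨(0,1), by norm_num [Lmem]⟩)
      rw [hid] at this
      simp [pTwoC, eMap] at this
  · have := congrFun h2 (eMap ⟨(0,0), by norm_num [Lmem]⟩)
    rw [hid] at this
    simp [pOne] at this
end
end

section
/- Since p₁ ≤ 1̄ − p₂ pointwise on L, the join fuzzy topology Δ₁ ∨ Δ₂ on L equals {0̄, p₁, 1̄−p₂, 1̄}, a set with exactly 4 elements; in particular Δ₁ ∨ Δ₂ and Ω₁ ∨ Ω₂ have different cardinalities (4 vs 5), so there is no bijection between them. -/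
noncomputable section
attribute [local instance] Classical.propDecidable

lemma pmax_spec {X : Type} (D : Set (X → ℝ))
    (hmax : ∀ f ∈ D, ∀ g ∈ D, (fun x => max (f x) (g x)) ∈ D)
    (S : Set (X → ℝ)) (hfin : S.Finite) :
    S ⊆ D → S.Nonempty →
    ∃ g ∈ D, (∀ f ∈ S, ∀ x, f x ≤ g x) ∧ (∀ x, ∃ f ∈ S, g x = f x) := by
  refine Set.Finite.induction_on (motive := fun S _ => S ⊆ D → S.Nonempty →
      ∃ g ∈ D, (∀ f ∈ S, ∀ x, f x ≤ g x) ∧ (∀ x, ∃ f ∈ S, g x = f x)) S hfin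
    (fun _ h => absurd rfl h.ne_empty) ?_
  intro a s ha hs ih hsub hne
  rcases s.eq_empty_or_nonempty with rfl | hsne
  · refine ⟨a, hsub (Set.mem_insert _ _), ?_, fun x => ⟨a, Set.mem_insert _ _, rfl⟩⟩
    rintro f (rfl | hf) x
    · exact le_refl _
    · exact absurd hf (Set.notMem_empty f)
  · obtain ⟨g, hgD, hub, hatt⟩ := ih (fun f hf => hsub (Set.mem_insert_of_mem _ hf)) hsne
    refine ⟨fun x => max (a x) (g x), hmax a (hsub (Set.mem_insert _ _)) g hgD, ?_, ?_⟩
    · rintro f (rfl | hf) x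
      · exact le_max_left _ _
      · exact le_trans (hub f hf x) (le_max_right _ _)
    · intro x
      rcases le_total (a x) (g x) with h | h
      · obtain ⟨f, hf, hfx⟩ := hatt x
        exact ⟨f, Set.mem_insert_of_mem _ hf, by show max (a x) (g x) = f x; rw [max_eq_right h]; exact hfx⟩
      · exact ⟨a, Set.mem_insert _ _, by show max (a x) (g x) = a x; exact max_eq_left h⟩

lemma sup_eq_of {X : Type} (S : Set (X → ℝ)) (hne : S.Nonempty) (g : X → ℝ)
    (hub : ∀ f ∈ S, ∀ x, f x ≤ g x) (hatt : ∀ x, ∃ f ∈ S, g x = f x) :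
    (fun x => ⨆ μ : S, (μ : X → ℝ) x) = g := by
  have : Nonempty S := hne.to_subtype
  funext x
  apply le_antisymm
  · exact ciSup_le fun ⟨f, hf⟩ => hub f hf x
  · obtain ⟨f, hf, hfx⟩ := hatt x
    have hbdd : BddAbove (Set.range fun μ : S => (μ : X → ℝ) x) := by
      refine ⟨g x, ?_⟩
      rintro _ ⟨⟨f', hf'⟩, rfl⟩
      exact hub f' hf' x
    calc g x = f x := hfx
    _ ≤ ⨆ μ : S, (μ : X → ℝ) x := le_ciSup hbdd ⟨f, hf⟩

lemma joinFT_eq {X : Type} (τ₁ τ₂ D : Set (X → ℝ)) (hD : IsFuzzyTopology D)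
    (h1 : τ₁ ⊆ D) (h2 : τ₂ ⊆ D)
    (hmin : ∀ δ, IsFuzzyTopology δ → τ₁ ⊆ δ → τ₂ ⊆ δ → D ⊆ δ) :
    joinFT τ₁ τ₂ = D := by
  apply Set.Subset.antisymm
  · exact Set.sInter_subset_of_mem ⟨hD, h1, h2⟩
  · intro f hf δ hδ
    exact hmin δ hδ.1 hδ.2.1 hδ.2.2 hf

lemma sup_closed {X : Type} (D : Set (X → ℝ)) (hfin : D.Finite)
    (hmax : ∀ f ∈ D, ∀ g ∈ D, (fun x => max (f x) (g x)) ∈ D) :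
    ∀ S : Set (X → ℝ), S.Nonempty → S ⊆ D → (fun x => ⨆ μ : S, (μ : X → ℝ) x) ∈ D := by
  intro S hne hS
  obtain ⟨g, hgD, hub, hatt⟩ := pmax_spec D hmax S (hfin.subset hS) hS hne
  rw [sup_eq_of S hne g hub hatt]
  exact hgD

def D4 : Set (LL → ℝ) := {fun _ => 0, pOne, pTwoC, fun _ => 1}

lemma hD4chain : ∀ f ∈ D4, ∀ g ∈ D4, (∀ x, f x ≤ g x) ∨ (∀ x, g x ≤ f x) := by
  intro f hf g hg
  rcases hf with rfl|rfl|rfl|rfl <;> rcases hg with rfl|rfl|rfl|rfl <;>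
  first
    | (left; intro z; obtain ⟨h1,h2,h3,h4,h5⟩ := z.2; simp only [pOne, pTwoC]; linarith)
    | (right; intro z; obtain ⟨h1,h2,h3,h4,h5⟩ := z.2; simp only [pOne, pTwoC]; linarith)

lemma hD4 : IsFuzzyTopology D4 := by
  have hmax : ∀ f ∈ D4, ∀ g ∈ D4, (fun x => max (f x) (g x)) ∈ D4 := by
    intro f hf g hg
    rcases hD4chain f hf g hg with h | h
    · have e : (fun x => max (f x) (g x)) = g := funext fun x => max_eq_right (h x)
      rw [e]; exact hg
    · have e : (fun x => max (f x) (g x)) = f := funext fun x => max_eq_left (h x)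
      rw [e]; exact hf
  refine ⟨?_, by simp [D4], by simp [D4],
    sup_closed D4 (Set.Finite.insert _ (Set.Finite.insert _ (Set.Finite.insert _
      (Set.finite_singleton _)))) hmax, ?_⟩
  · intro μ hμ z
    obtain ⟨h1,h2,h3,h4,h5⟩ := z.2
    rcases hμ with rfl|rfl|rfl|rfl <;> simp only [pOne, pTwoC] <;> constructor <;> linarith
  · intro f hf g hg
    rcases hD4chain f hf g hg with h | h
    · have e : (fun x => min (f x) (g x)) = f := funext fun x => min_eq_left (h x)
      rw [e]; exact hf
    · have e : (fun x => min (f x) (g x)) = g := funext fun x => min_eq_right (h x)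
      rw [e]; exact hg

lemma joinD_eq : joinFT Delta1 Delta2 = D4 := by
  apply joinFT_eq _ _ _ hD4
  · rintro f (rfl|rfl|rfl) <;> simp [D4]
  · rintro f (rfl|rfl|rfl) <;> simp [D4]
  · rintro δ hδ h1 h2 f (rfl|rfl|rfl|rfl)
    · exact hδ.2.1
    · exact h1 (Or.inr (Or.inl rfl))
    · exact h2 (Or.inr (Or.inl rfl))
    · exact hδ.2.2.1

def qm : TwoI → ℝ := fun z => max (q1 z) (q2 z)
def D5 : Set (TwoI → ℝ) := {fun _ => 0, q1, q2, qm, fun _ => 1}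

lemma q1_bd (z : TwoI) : 0 ≤ q1 z ∧ q1 z ≤ 1 := by
  unfold q1; rcases z.2 with ⟨h1,h2,h3⟩|⟨h1,h2,h3⟩ <;> split_ifs <;> constructor <;> linarith

lemma q2_bd (z : TwoI) : 0 ≤ q2 z ∧ q2 z ≤ 1 := by
  unfold q2; rcases z.2 with ⟨h1,h2,h3⟩|⟨h1,h2,h3⟩ <;> split_ifs <;> constructor <;> linarith

lemma q12_zero (z : TwoI) : q1 z = 0 ∨ q2 z = 0 := by
  unfold q1 q2
  rcases z.2 with ⟨h1,h2,h3⟩|⟨h1,h2,h3⟩ <;> split_ifs <;> simp_all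

lemma q1n (z : TwoI) : 0 ≤ q1 z := (q1_bd z).1
lemma q1o (z : TwoI) : q1 z ≤ 1 := (q1_bd z).2
lemma q2n (z : TwoI) : 0 ≤ q2 z := (q2_bd z).1
lemma q2o (z : TwoI) : q2 z ≤ 1 := (q2_bd z).2
lemma qmn (z : TwoI) : 0 ≤ qm z := le_trans (q1n z) (le_max_left _ _)
lemma qmo (z : TwoI) : qm z ≤ 1 := max_le (q1o z) (q2o z)

lemma maxf_eq_right {f g : TwoI → ℝ} (h : ∀ z, f z ≤ g z) :
    (fun x => max (f x) (g x)) = g := funext fun z => max_eq_right (h z)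
lemma maxf_eq_left {f g : TwoI → ℝ} (h : ∀ z, g z ≤ f z) :
    (fun x => max (f x) (g x)) = f := funext fun z => max_eq_left (h z)
lemma minf_eq_left {f g : TwoI → ℝ} (h : ∀ z, f z ≤ g z) :
    (fun x => min (f x) (g x)) = f := funext fun z => min_eq_left (h z)
lemma minf_eq_right {f g : TwoI → ℝ} (h : ∀ z, g z ≤ f z) :
    (fun x => min (f x) (g x)) = g := funext fun z => min_eq_right (h z)

lemma maxq21 : (fun x => max (q2 x) (q1 x)) = qm := funext fun z => max_comm _ _
lemma minq12 : (fun x => min (q1 x) (q2 x)) = (fun _ => (0:ℝ)) := by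
  funext z
  rcases q12_zero z with c | c
  · rw [c]; exact min_eq_left (q2n z)
  · rw [c]; exact min_eq_right (q1n z)
lemma minq21 : (fun x => min (q2 x) (q1 x)) = (fun _ => (0:ℝ)) := by
  rw [show (fun x => min (q2 x) (q1 x)) = fun x => min (q1 x) (q2 x) from
    funext fun z => min_comm _ _, minq12]

lemma m0 : (fun _ => (0:ℝ)) ∈ D5 := Set.mem_insert _ _
lemma mq1 : q1 ∈ D5 := Set.mem_insert_of_mem _ (Set.mem_insert _ _)
lemma mq2 : q2 ∈ D5 := Set.mem_insert_of_mem _ (Set.mem_insert_of_mem _ (Set.mem_insert _ _))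
lemma mqm : qm ∈ D5 :=
  Set.mem_insert_of_mem _ (Set.mem_insert_of_mem _ (Set.mem_insert_of_mem _ (Set.mem_insert _ _)))
lemma m1 : (fun _ => (1:ℝ)) ∈ D5 :=
  Set.mem_insert_of_mem _ (Set.mem_insert_of_mem _ (Set.mem_insert_of_mem _
    (Set.mem_insert_of_mem _ (Set.mem_singleton _))))

lemma memD5 {f g : TwoI → ℝ} (h : f = g) (hg : g ∈ D5) : f ∈ D5 := h ▸ hg

lemma hD5 : IsFuzzyTopology D5 := by
  have hmax : ∀ f ∈ D5, ∀ g ∈ D5, (fun x => max (f x) (g x)) ∈ D5 := by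
    intro f hf g hg
    rcases hf with rfl|rfl|rfl|rfl|rfl <;> rcases hg with rfl|rfl|rfl|rfl|rfl
    exacts [
      memD5 (maxf_eq_right fun z => le_refl _) m0,
      memD5 (maxf_eq_right fun z => q1n z) mq1,
      memD5 (maxf_eq_right fun z => q2n z) mq2,
      memD5 (maxf_eq_right fun z => qmn z) mqm,
      memD5 (maxf_eq_right fun z => zero_le_one) m1,
      memD5 (maxf_eq_left fun z => q1n z) mq1,
      memD5 (maxf_eq_right fun z => le_refl _) mq1,
      memD5 rfl mqm,
      memD5 (maxf_eq_right fun z => le_max_left _ _) mqm,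
      memD5 (maxf_eq_right fun z => q1o z) m1,
      memD5 (maxf_eq_left fun z => q2n z) mq2,
      memD5 maxq21 mqm,
      memD5 (maxf_eq_right fun z => le_refl _) mq2,
      memD5 (maxf_eq_right fun z => le_max_right _ _) mqm,
      memD5 (maxf_eq_right fun z => q2o z) m1,
      memD5 (maxf_eq_left fun z => qmn z) mqm,
      memD5 (maxf_eq_left fun z => le_max_left _ _) mqm,
      memD5 (maxf_eq_left fun z => le_max_right _ _) mqm,
      memD5 (maxf_eq_right fun z => le_refl _) mqm,
      memD5 (maxf_eq_right fun z => qmo z) m1,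
      memD5 (maxf_eq_left fun z => zero_le_one) m1,
      memD5 (maxf_eq_left fun z => q1o z) m1,
      memD5 (maxf_eq_left fun z => q2o z) m1,
      memD5 (maxf_eq_left fun z => qmo z) m1,
      memD5 (maxf_eq_right fun z => le_refl _) m1]
  refine ⟨?_, m0, m1,
    sup_closed D5 (Set.Finite.insert _ (Set.Finite.insert _ (Set.Finite.insert _
      (Set.Finite.insert _ (Set.finite_singleton _))))) hmax, ?_⟩
  · intro μ hμ z
    rcases hμ with rfl|rfl|rfl|rfl|rfl
    exacts [⟨le_refl _, zero_le_one⟩, ⟨q1n z, q1o z⟩, ⟨q2n z, q2o z⟩,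
      ⟨qmn z, qmo z⟩, ⟨zero_le_one, le_refl _⟩]
  · intro f hf g hg
    rcases hf with rfl|rfl|rfl|rfl|rfl <;> rcases hg with rfl|rfl|rfl|rfl|rfl
    exacts [
      memD5 (minf_eq_left fun z => le_refl _) m0,
      memD5 (minf_eq_left fun z => q1n z) m0,
      memD5 (minf_eq_left fun z => q2n z) m0,
      memD5 (minf_eq_left fun z => qmn z) m0,
      memD5 (minf_eq_left fun z => zero_le_one) m0,
      memD5 (minf_eq_right fun z => q1n z) m0,
      memD5 (minf_eq_left fun z => le_refl _) mq1,
      memD5 minq12 m0,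
      memD5 (minf_eq_left fun z => le_max_left _ _) mq1,
      memD5 (minf_eq_left fun z => q1o z) mq1,
      memD5 (minf_eq_right fun z => q2n z) m0,
      memD5 minq21 m0,
      memD5 (minf_eq_left fun z => le_refl _) mq2,
      memD5 (minf_eq_left fun z => le_max_right _ _) mq2,
      memD5 (minf_eq_left fun z => q2o z) mq2,
      memD5 (minf_eq_right fun z => qmn z) m0,
      memD5 (minf_eq_right fun z => le_max_left _ _) mq1,
      memD5 (minf_eq_right fun z => le_max_right _ _) mq2,
      memD5 (minf_eq_left fun z => le_refl _) mqm,
      memD5 (minf_eq_left fun z => qmo z) mqm,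
      memD5 (minf_eq_right fun z => zero_le_one) m0,
      memD5 (minf_eq_right fun z => q1o z) mq1,
      memD5 (minf_eq_right fun z => q2o z) mq2,
      memD5 (minf_eq_right fun z => qmo z) mqm,
      memD5 (minf_eq_left fun z => le_refl _) m1]
  
lemma joinO_eq : joinFT Omega1 Omega2 = D5 := by
  apply joinFT_eq _ _ _ hD5
  · rintro f (rfl|rfl|rfl)
    exacts [m0, mq1, m1]
  · rintro f (rfl|rfl|rfl)
    exacts [m0, mq2, m1]
  · rintro δ hδ h1 h2 f (rfl|rfl|rfl|rfl|rfl)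
    · exact hδ.2.1
    · exact h1 (Or.inr (Or.inl rfl))
    · exact h2 (Or.inr (Or.inl rfl))
    · have hq1 : q1 ∈ δ := h1 (Or.inr (Or.inl rfl))
      have hq2 : q2 ∈ δ := h2 (Or.inr (Or.inl rfl))
      have hsub : ({q1, q2} : Set (TwoI → ℝ)) ⊆ δ := by rintro f (rfl|rfl) <;> assumption
      have hsup := hδ.2.2.2.1 {q1, q2} ⟨q1, Or.inl rfl⟩ hsub
      have he : (fun x => ⨆ μ : ({q1, q2} : Set (TwoI → ℝ)), (μ : TwoI → ℝ) x) = qm := by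
        apply sup_eq_of _ ⟨q1, Or.inl rfl⟩
        · rintro f (rfl|rfl) x
          · exact le_max_left _ _
          · exact le_max_right _ _
        · intro x
          rcases le_total (q1 x) (q2 x) with h | h
          · exact ⟨q2, Or.inr rfl, max_eq_right h⟩
          · exact ⟨q1, Or.inl rfl, max_eq_left h⟩
      rwa [he] at hsup
    · exact hδ.2.2.1

def zA : LL := ⟨(1, 0), by norm_num [Lmem]⟩
def zB : LL := ⟨(0, 0), by norm_num [Lmem]⟩
def zC : LL := ⟨(0, 1), by norm_num [Lmem]⟩
def wA : TwoI := ⟨(1, 0), Or.inl ⟨by norm_num, by norm_num, rfl⟩⟩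
def wB : TwoI := ⟨(0, 1), Or.inr ⟨rfl, by norm_num, by norm_num⟩⟩
def wC : TwoI := ⟨(0, 0), Or.inl ⟨le_refl _, by norm_num, rfl⟩⟩

lemma ncardD4 : D4.ncard = 4 := by
  have h1 : (fun _ => (0:ℝ)) ∉ ({pOne, pTwoC, fun _ => 1} : Set (LL → ℝ)) := by
    simp only [Set.mem_insert_iff, Set.mem_singleton_iff]
    push_neg
    refine ⟨fun h => ?_, fun h => ?_, fun h => ?_⟩
    · have := congrFun h zA; norm_num [pOne, zA] at this
    · have := congrFun h zB; norm_num [pTwoC, zB] at this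
    · have := congrFun h zB; norm_num at this
  have h2 : pOne ∉ ({pTwoC, fun _ => 1} : Set (LL → ℝ)) := by
    simp only [Set.mem_insert_iff, Set.mem_singleton_iff]
    push_neg
    refine ⟨fun h => ?_, fun h => ?_⟩
    · have := congrFun h zB; norm_num [pOne, pTwoC, zB] at this
    · have := congrFun h zB; norm_num [pOne, zB] at this
  have h3 : pTwoC ∉ ({fun _ => 1} : Set (LL → ℝ)) := by
    simp only [Set.mem_singleton_iff]
    intro h
    have := congrFun h zC; norm_num [pTwoC, zC] at this
  rw [show D4 = insert (fun _ => (0:ℝ)) {pOne, pTwoC, fun _ => 1} from rfl,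
    Set.ncard_insert_of_notMem h1 (Set.toFinite _),
    Set.ncard_insert_of_notMem h2 (Set.toFinite _),
    Set.ncard_insert_of_notMem h3 (Set.toFinite _),
    Set.ncard_singleton]

lemma ncardD5 : D5.ncard = 5 := by
  have e1 : q1 wA = 1 := by norm_num [q1, wA]
  have e2 : q2 wA = 0 := by norm_num [q2, wA]
  have e3 : q1 wB = 0 := by norm_num [q1, wB]
  have e4 : q2 wB = 1 := by norm_num [q2, wB]
  have e5 : qm wC = 0 := by norm_num [qm, q1, q2, wC]
  have h1 : (fun _ => (0:ℝ)) ∉ ({q1, q2, qm, fun _ => 1} : Set (TwoI → ℝ)) := by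
    simp only [Set.mem_insert_iff, Set.mem_singleton_iff]
    push_neg
    refine ⟨fun h => ?_, fun h => ?_, fun h => ?_, fun h => ?_⟩
    · have := congrFun h wA; rw [e1] at this; norm_num at this
    · have := congrFun h wB; rw [e4] at this; norm_num at this
    · have := congrFun h wA; rw [show qm wA = 1 by rw [qm, e1, e2]; norm_num] at this
      norm_num at this
    · have := congrFun h wA; norm_num at this
  have h2 : q1 ∉ ({q2, qm, fun _ => 1} : Set (TwoI → ℝ)) := by
    simp only [Set.mem_insert_iff, Set.mem_singleton_iff]
    push_neg
    refine ⟨fun h => ?_, fun h => ?_, fun h => ?_⟩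
    · have := congrFun h wA; rw [e1, e2] at this; norm_num at this
    · have := congrFun h wB; rw [e3, show qm wB = 1 by rw [qm, e3, e4]; norm_num] at this
      norm_num at this
    · have := congrFun h wB; rw [e3] at this; norm_num at this
  have h3 : q2 ∉ ({qm, fun _ => 1} : Set (TwoI → ℝ)) := by
    simp only [Set.mem_insert_iff, Set.mem_singleton_iff]
    push_neg
    refine ⟨fun h => ?_, fun h => ?_⟩
    · have := congrFun h wA; rw [e2, show qm wA = 1 by rw [qm, e1, e2]; norm_num] at this
      norm_num at this
    · have := congrFun h wA; rw [e2] at this; norm_num at this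
  have h4 : qm ∉ ({fun _ => 1} : Set (TwoI → ℝ)) := by
    simp only [Set.mem_singleton_iff]
    intro h
    have := congrFun h wC; rw [e5] at this; norm_num at this
  rw [show D5 = insert (fun _ => (0:ℝ)) {q1, q2, qm, fun _ => 1} from rfl,
    Set.ncard_insert_of_notMem h1 (Set.toFinite _),
    Set.ncard_insert_of_notMem h2 (Set.toFinite _),
    Set.ncard_insert_of_notMem h3 (Set.toFinite _),
    Set.ncard_insert_of_notMem h4 (Set.toFinite _),
    Set.ncard_singleton]

/-- since `p₁ ≤ 1̄ - p₂`, the join `Δ₁ ∨ Δ₂` equals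
`{0̄, p₁, 1̄ - p₂, 1̄}`, which has exactly 4 elements; hence there is no
bijection between `Δ₁ ∨ Δ₂` and `Ω₁ ∨ Ω₂` (which has 5 elements). -/
theorem stmt18 :
    (∀ z : LL, pOne z ≤ pTwoC z) ∧
    joinFT Delta1 Delta2 = {fun _ => 0, pOne, pTwoC, fun _ => 1} ∧
    (joinFT Delta1 Delta2).ncard = 4 ∧
    (joinFT Omega1 Omega2).ncard = 5 ∧
    ¬ ∃ F : (LL → ℝ) → (TwoI → ℝ),
        Set.BijOn F (joinFT Delta1 Delta2) (joinFT Omega1 Omega2) := by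
  refine ⟨?_, joinD_eq, ?_, ?_, ?_⟩
  · intro z
    obtain ⟨h1, h2, h3, h4, h5⟩ := z.2
    simp only [pOne, pTwoC]
    linarith
  · rw [joinD_eq]; exact ncardD4
  · rw [joinO_eq]; exact ncardD5
  · rintro ⟨F, hF⟩
    have h := Set.ncard_image_of_injOn hF.injOn
    rw [hF.image_eq, joinD_eq, joinO_eq, ncardD4, ncardD5] at h
    norm_num at h
end
end
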